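/- Let H be a nonempty history with n operations and concurrency k. Then the number of partition states of H satisfies |𝒮_H| ≤ 2n·2^k. -/
import Mathlib


structure Operation (M V : Type) where
  id : ℕ
  method : M
  value : V
  tinv : ℚ
  tres : ℚ
deriving DecidableEq

def WellFormed {M V : Type} (H : Finset (Operation M V)) : Prop :=
  ∀ o ∈ H, o.tinv < o.tres

def IsPartitionState {M V : Type} (H S : Finset (Operation M V)) : Prop :=
  S ⊆ H ∧ ∃ t : ℚ, ∀ o ∈ H, (o.tres < t → o ∈ S) ∧ (t < o.tinv → o ∉ S)

def IsLinearization {M V : Type} (X : Finset (Operation M V)) (ℓ : Operation M V → ℚ) : Prop :=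
  Set.InjOn ℓ ↑X ∧ ∀ o ∈ X, o.tinv < ℓ o ∧ ℓ o < o.tres

/-- The set of all invocation and response times of `H`. -/
def histTimes {M V : Type} [DecidableEq M] [DecidableEq V]
    (H : Finset (Operation M V)) : Finset ℚ :=
  H.image (fun o => o.tinv) ∪ H.image (fun o => o.tres)

/-- Concurrency: the maximum over t ∈ 𝒯_H of the number of operations whose
interval contains t. -/
def concurrency {M V : Type} [DecidableEq M] [DecidableEq V]
    (H : Finset (Operation M V)) : ℕ :=
  (histTimes H).sup (fun t => (H.filter (fun o => o.tinv ≤ t ∧ t ≤ o.tres)).card)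

lemma tinv_mem_histTimes {M V : Type} [DecidableEq M] [DecidableEq V]
    {H : Finset (Operation M V)} {o : Operation M V} (ho : o ∈ H) :
    o.tinv ∈ histTimes H := by
  simp only [histTimes, Finset.mem_union, Finset.mem_image]
  exact Or.inl ⟨o, ho, rfl⟩

lemma tres_mem_histTimes {M V : Type} [DecidableEq M] [DecidableEq V]
    {H : Finset (Operation M V)} {o : Operation M V} (ho : o ∈ H) :
    o.tres ∈ histTimes H := by
  simp only [histTimes, Finset.mem_union, Finset.mem_image]
  exact Or.inr ⟨o, ho, rfl⟩

theorem stmt0 {M V : Type} [DecidableEq M] [DecidableEq V]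
    (H : Finset (Operation M V)) (hne : H.Nonempty) (hwf : WellFormed H)
    (n k : ℕ) (hn : n = H.card) (hk : k = concurrency H) :
    {S : Finset (Operation M V) | IsPartitionState H S}.ncard ≤ 2 * n * 2 ^ k := by
  classical
  subst hn hk
  set T : Finset (Finset (Operation M V)) :=
    (histTimes H).biUnion (fun t =>
      ((H.filter fun o => o.tinv ≤ t ∧ t ≤ o.tres).powerset).image
        (fun P => (H.filter fun o => o.tres < t) ∪ P)) with hT
  have hsub : {S : Finset (Operation M V) | IsPartitionState H S} ⊆ ↑T := by
    intro S hS
    obtain ⟨hSH, t, ht⟩ := hS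
    refine Finset.mem_coe.mpr (Finset.mem_biUnion.mpr ?_)
    by_cases hA : ((histTimes H).filter (fun u => u ≤ t)).Nonempty
    · set t' := ((histTimes H).filter (fun u => u ≤ t)).max' hA with ht'
      have ht'mem : t' ∈ (histTimes H).filter (fun u => u ≤ t) :=
        Finset.max'_mem _ _
      have ht'T : t' ∈ histTimes H := (Finset.mem_filter.mp ht'mem).1
      have ht'le : t' ≤ t := (Finset.mem_filter.mp ht'mem).2
      have hmax : ∀ τ ∈ histTimes H, τ ≤ t → τ ≤ t' := by
        intro τ hτ hτt
        rw [ht']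
        exact Finset.le_max' ((histTimes H).filter (fun u => u ≤ t)) τ (Finset.mem_filter.mpr ⟨hτ, hτt⟩)
      refine ⟨t', ht'T, Finset.mem_image.mpr
        ⟨S.filter (fun o => o.tinv ≤ t' ∧ t' ≤ o.tres), ?_, ?_⟩⟩
      · refine Finset.mem_powerset.mpr (fun o ho => ?_)
        simp only [Finset.mem_filter] at ho ⊢
        exact ⟨hSH ho.1, ho.2⟩
      · ext o
        simp only [Finset.mem_union, Finset.mem_filter]
        constructor
        · rintro (⟨hoH, hlt⟩ | ⟨hoS, _⟩)
          · exact (ht o hoH).1 (lt_of_lt_of_le hlt ht'le)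
          · exact hoS
        · intro hoS
          by_cases hres : o.tres < t'
          · exact Or.inl ⟨hSH hoS, hres⟩
          · refine Or.inr ⟨hoS, ?_, not_lt.mp hres⟩
            have hinv_le_t : o.tinv ≤ t := by
              by_contra h
              exact (ht o (hSH hoS)).2 (not_le.mp h) hoS
            exact hmax o.tinv (tinv_mem_histTimes (hSH hoS)) hinv_le_t
    · -- no time point ≤ t : S must be empty
      have hTne : (histTimes H).Nonempty := by
        obtain ⟨o, ho⟩ := hne
        exact ⟨o.tinv, tinv_mem_histTimes ho⟩
      set t' := (histTimes H).min' hTne with ht'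
      have hgt : ∀ τ ∈ histTimes H, t < τ := by
        intro τ hτ
        by_contra h
        exact hA ⟨τ, Finset.mem_filter.mpr ⟨hτ, not_lt.mp h⟩⟩
      have hSempty : S = ∅ := by
        apply Finset.eq_empty_of_forall_notMem
        intro o hoS
        exact (ht o (hSH hoS)).2 (hgt o.tinv (tinv_mem_histTimes (hSH hoS))) hoS
      refine ⟨t', (histTimes H).min'_mem hTne, Finset.mem_image.mpr
        ⟨∅, Finset.mem_powerset.mpr (Finset.empty_subset _), ?_⟩⟩
      rw [hSempty, Finset.union_empty]
      apply Finset.eq_empty_of_forall_notMem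
      intro o ho
      rw [Finset.mem_filter] at ho
      exact absurd ho.2 (not_lt.mpr ((histTimes H).min'_le _ (tres_mem_histTimes ho.1)))
  have h1 : {S : Finset (Operation M V) | IsPartitionState H S}.ncard ≤ T.card := by
    have := Set.ncard_le_ncard hsub T.finite_toSet
    simpa [Set.ncard_coe_finset] using this
  refine h1.trans ?_
  calc T.card
      ≤ ∑ t ∈ histTimes H,
        (((H.filter fun o => o.tinv ≤ t ∧ t ≤ o.tres).powerset).image
          (fun P => (H.filter fun o => o.tres < t) ∪ P)).card :=
        Finset.card_biUnion_le
    _ ≤ ∑ _t ∈ histTimes H, 2 ^ concurrency H := by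
        apply Finset.sum_le_sum
        intro t htmem
        calc (((H.filter fun o => o.tinv ≤ t ∧ t ≤ o.tres).powerset).image
              (fun P => (H.filter fun o => o.tres < t) ∪ P)).card
            ≤ ((H.filter fun o => o.tinv ≤ t ∧ t ≤ o.tres).powerset).card :=
              Finset.card_image_le
          _ = 2 ^ (H.filter fun o => o.tinv ≤ t ∧ t ≤ o.tres).card :=
              Finset.card_powerset _
          _ ≤ 2 ^ concurrency H := by
              apply Nat.pow_le_pow_right (by norm_num)
              exact Finset.le_sup
                (f := fun t => (H.filter (fun o => o.tinv ≤ t ∧ t ≤ o.tres)).card) htmem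
    _ = (histTimes H).card * 2 ^ concurrency H := by
        rw [Finset.sum_const, smul_eq_mul]
    _ ≤ (2 * H.card) * 2 ^ concurrency H := by
        apply Nat.mul_le_mul_right
        calc (histTimes H).card
            ≤ (H.image (fun o => o.tinv)).card + (H.image (fun o => o.tres)).card :=
              Finset.card_union_le _ _
          _ ≤ H.card + H.card := add_le_add Finset.card_image_le Finset.card_image_le
          _ = 2 * H.card := (two_mul _).symm
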